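/- Let W be a real random variable on a probability space, let h : ℝ → ℝ be continuous and strictly monotone, and let μ_R ∈ ℝ. For each p ∈ ℝ define R_p = h(W + μ_R·p). If the law of R_p is the same for all p ∈ ℝ, then μ_R = 0, so that R_p = h(W) for every p. -/

import Mathlib

open MeasureTheory ProbabilityTheory

/-- **Core of the supplementary theorem.** For `R p = h (W + μR * p)` with `h`
continuous and strictly monotone, if the law of `R p` is the same for all `p`,
then `μR = 0`, so that `R p = h ∘ W` for every `p`. -/
theorem shift_zero_of_laws_eq
    {Ω : Type*} [MeasureSpace Ω] [IsProbabilityMeasure (ℙ : Measure Ω)]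
    (W : Ω → ℝ) (hW : Measurable W)
    (h : ℝ → ℝ) (hcont : Continuous h) (hmono : StrictMono h ∨ StrictAnti h)
    (μR : ℝ)
    (R : ℝ → Ω → ℝ) (hR : ∀ p ω, R p ω = h (W ω + μR * p))
    (hlaw : ∀ p p' : ℝ,
      Measure.map (R p) (ℙ : Measure Ω) = Measure.map (R p') (ℙ : Measure Ω)) :
    μR = 0 ∧ ∀ p ω, R p ω = h (W ω) := by
  have hμ : μR = 0 := by
    by_contra hμ
    have key : ∀ t a : ℝ, (ℙ : Measure Ω) {ω | W ω + t ≤ a} = ℙ {ω | W ω ≤ a} := by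
      intro t a
      have hl := hlaw (t / μR) 0
      have hRfun : R (t / μR) = fun ω => h (W ω + t) := by
        funext ω; rw [hR]; congr 2; field_simp
      have hR0 : R 0 = fun ω => h (W ω) := by
        funext ω; rw [hR]; ring_nf
      rw [hRfun, hR0] at hl
      have m1 : Measurable fun ω => h (W ω + t) :=
        hcont.measurable.comp (hW.add_const t)
      have m2 : Measurable fun ω => h (W ω) := hcont.measurable.comp hW
      rcases hmono with hm | hm
      · have hset := congrArg (fun ν : Measure ℝ => ν (Set.Iic (h a))) hl
        rw [Measure.map_apply m1 measurableSet_Iic,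
            Measure.map_apply m2 measurableSet_Iic] at hset
        convert hset using 2 <;> ext ω <;>
          simp [Set.preimage, hm.le_iff_le]
      · have hset := congrArg (fun ν : Measure ℝ => ν (Set.Ici (h a))) hl
        rw [Measure.map_apply m1 measurableSet_Ici,
            Measure.map_apply m2 measurableSet_Ici] at hset
        convert hset using 2 <;> ext ω <;>
          simp [Set.preimage, hm.le_iff_ge]
    set μ := Measure.map W (ℙ : Measure Ω) with hμdef
    have hmap : ∀ s : ℝ, μ (Set.Iic s) = ℙ {ω | W ω ≤ s} := by
      intro s
      rw [Measure.map_apply hW measurableSet_Iic]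
      rfl
    have hconst : ∀ s : ℝ, μ (Set.Iic s) = μ (Set.Iic 0) := by
      intro s
      rw [hmap, hmap]
      have := key (-s) 0
      have hsets : {ω | W ω + -s ≤ 0} = {ω | W ω ≤ s} := by
        ext ω; simp [neg_add_nonpos_iff]
      rw [hsets] at this
      exact this
    have hfin : IsProbabilityMeasure μ := Measure.isProbabilityMeasure_map hW.aemeasurable
    have h1 : Filter.Tendsto (fun s : ℝ => μ (Set.Iic s)) Filter.atTop
        (nhds (μ Set.univ)) := tendsto_measure_Iic_atTop μ
    have h1' : Filter.Tendsto (fun s : ℝ => μ (Set.Iic s)) Filter.atTop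
        (nhds (μ (Set.Iic 0))) := by
      simp only [hconst]
      exact tendsto_const_nhds
    have e1 : μ Set.univ = μ (Set.Iic 0) := tendsto_nhds_unique h1 h1'
    have h2 : Filter.Tendsto (fun n : ℕ => μ (Set.Iic (-(n : ℝ)))) Filter.atTop
        (nhds (μ (⋂ n : ℕ, Set.Iic (-(n : ℝ))))) := by
      refine tendsto_measure_iInter_atTop (fun n => measurableSet_Iic.nullMeasurableSet)
        (fun m n hmn => ?_) ⟨0, measure_ne_top μ _⟩
      exact Set.Iic_subset_Iic.2 (by exact_mod_cast neg_le_neg (by exact_mod_cast hmn))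
    have hempty : (⋂ n : ℕ, Set.Iic (-(n : ℝ))) = ∅ := by
      ext x
      simp only [Set.mem_iInter, Set.mem_Iic, Set.mem_empty_iff_false, iff_false, not_forall,
        not_le]
      obtain ⟨n, hn⟩ := exists_nat_gt (-x)
      exact ⟨n, by linarith⟩
    rw [hempty] at h2
    have h2' : Filter.Tendsto (fun n : ℕ => μ (Set.Iic (-(n : ℝ)))) Filter.atTop
        (nhds (μ (Set.Iic 0))) := by
      simp only [hconst]
      exact tendsto_const_nhds
    have e2 : μ (∅ : Set ℝ) = μ (Set.Iic 0) := tendsto_nhds_unique h2 h2'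
    have : (1 : ENNReal) = 0 := by
      calc (1 : ENNReal) = μ Set.univ := (measure_univ).symm
        _ = μ (Set.Iic 0) := e1
        _ = μ ∅ := e2.symm
        _ = 0 := measure_empty
    exact one_ne_zero this
  subst hμ
  refine ⟨rfl, fun p ω => ?_⟩
  rw [hR]; ring_nf
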